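/- Let g be a random vector in ℝ^d on a probability space such that g and ‖g‖² are integrable, and suppose that for every coordinate v ∈ {1, …, d} the probability that the v-th coordinate of g is nonzero is at most Δ. Then ‖E[g]‖² ≤ Δ · E[‖g‖²]. -/

import Mathlib

open MeasureTheory

lemma sq_integral_le_of_sparse_coord
    {Ω : Type*} [MeasurableSpace Ω] (P : Measure Ω) [IsProbabilityMeasure P]
    (f : Ω → ℝ) (hf1 : Integrable f P) (hf2 : Integrable (fun ω => f ω ^ 2) P)
    (Δ : ℝ) (hΔ0 : 0 ≤ Δ) (hA : P {ω | f ω ≠ 0} ≤ ENNReal.ofReal Δ) :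
    (∫ ω, f ω ∂P) ^ 2 ≤ Δ * ∫ ω, f ω ^ 2 ∂P := by
  obtain ⟨f', hf'meas, hf'eq⟩ := hf1.aestronglyMeasurable
  have hf'm : Measurable f' := hf'meas.measurable
  set A : Set Ω := {ω | f' ω ≠ 0} with hA_def
  have hAmeas : MeasurableSet A := (hf'm (measurableSet_singleton 0)).compl
  have hPA : P A = P {ω | f ω ≠ 0} := by
    apply measure_congr
    filter_upwards [hf'eq] with ω hω
    show (f' ω ≠ 0) = (f ω ≠ 0)
    rw [hω]
  have hPAle : (P A).toReal ≤ Δ := by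
    rw [hPA]
    calc (P {ω | f ω ≠ 0}).toReal ≤ (ENNReal.ofReal Δ).toReal :=
          ENNReal.toReal_mono ENNReal.ofReal_ne_top hA
      _ = Δ := ENNReal.toReal_ofReal hΔ0
  -- Cauchy-Schwarz
  have habs : |∫ ω, f ω ∂P| ≤ ∫ ω, |f' ω| * A.indicator (fun _ => (1:ℝ)) ω ∂P := by
    have heq : ∫ ω, f ω ∂P = ∫ ω, f' ω * A.indicator (fun _ => (1:ℝ)) ω ∂P := by
      apply integral_congr_ae
      filter_upwards [hf'eq] with ω hω
      by_cases h : f' ω = 0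
      · simp [hω, h]
      · have : ω ∈ A := h
        simp [hω, Set.indicator_of_mem this]
    rw [heq]
    rw [← Real.norm_eq_abs]
    refine (norm_integral_le_integral_norm (fun ω => f' ω * A.indicator (fun _ => (1:ℝ)) ω)).trans
      (le_of_eq (integral_congr_ae ?_))
    filter_upwards with ω
    by_cases h : ω ∈ A <;>
      simp [Set.indicator_of_mem, Set.indicator_of_notMem, h, abs_mul, Real.norm_eq_abs]
  have hmemf : MemLp (fun ω => |f' ω|) (ENNReal.ofReal 2) P := by
    rw [show ENNReal.ofReal 2 = 2 by norm_num]
    refine (memLp_two_iff_integrable_sq (hf'm.abs.aestronglyMeasurable)).mpr ?_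
    refine (hf2.congr ?_)
    filter_upwards [hf'eq] with ω hω
    rw [← hω, sq_abs]
  have hmemi : MemLp (A.indicator (fun _ => (1:ℝ))) (ENNReal.ofReal 2) P :=
    memLp_indicator_const _ hAmeas 1 (Or.inr (measure_ne_top P A))
  have hCS := integral_mul_le_Lp_mul_Lq_of_nonneg (Real.holderConjugate_iff_eq_conjExponent
      (by norm_num) |>.mpr (by norm_num)) (Filter.Eventually.of_forall fun ω => abs_nonneg _)
      (Filter.Eventually.of_forall fun ω => Set.indicator_nonneg (fun _ _ => zero_le_one) ω)
      hmemf hmemi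
  simp only [show (2:ℝ) = ((2:ℕ):ℝ) from by norm_num, Real.rpow_natCast] at hCS
  have hif2 : ∫ ω, |f' ω| ^ (2:ℕ) ∂P = ∫ ω, f ω ^ 2 ∂P := by
    apply integral_congr_ae
    filter_upwards [hf'eq] with ω hω
    rw [← hω, sq_abs]
  have hiind : ∫ ω, A.indicator (fun _ => (1:ℝ)) ω ^ (2:ℕ) ∂P = (P A).toReal := by
    have : ∀ ω, A.indicator (fun _ => (1:ℝ)) ω ^ (2:ℕ) = A.indicator (fun _ => (1:ℝ)) ω := by
      intro ω; by_cases h : ω ∈ A <;>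
        simp [Set.indicator_of_mem, Set.indicator_of_notMem, h]
    simp_rw [this]
    rw [integral_indicator hAmeas]
    simp [Measure.real]
  rw [hif2, hiind] at hCS
  have hS : 0 ≤ ∫ ω, f ω ^ 2 ∂P := integral_nonneg fun ω => sq_nonneg _
  have hT : (0:ℝ) ≤ (P A).toReal := ENNReal.toReal_nonneg
  have hle : |∫ ω, f ω ∂P| ≤ (∫ ω, f ω ^ 2 ∂P) ^ ((1:ℝ)/2) * (P A).toReal ^ ((1:ℝ)/2) :=
    habs.trans hCS
  have hsq : (∫ ω, f ω ∂P) ^ 2 ≤ ((∫ ω, f ω ^ 2 ∂P) ^ ((1:ℝ)/2) * (P A).toReal ^ ((1:ℝ)/2)) ^ 2 := by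
    rw [← sq_abs]
    exact pow_le_pow_left₀ (abs_nonneg _) hle 2
  calc (∫ ω, f ω ∂P) ^ 2
      ≤ ((∫ ω, f ω ^ 2 ∂P) ^ ((1:ℝ)/2) * (P A).toReal ^ ((1:ℝ)/2)) ^ 2 := hsq
    _ = (∫ ω, f ω ^ 2 ∂P) * (P A).toReal := by
        rw [mul_pow, ← Real.rpow_natCast ((∫ ω, f ω ^ 2 ∂P) ^ ((1:ℝ)/2)) 2,
          ← Real.rpow_natCast ((P A).toReal ^ ((1:ℝ)/2)) 2,
          ← Real.rpow_mul hS, ← Real.rpow_mul hT]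
        norm_num
    _ ≤ (∫ ω, f ω ^ 2 ∂P) * Δ := by
        exact mul_le_mul_of_nonneg_left hPAle hS
    _ = Δ * ∫ ω, f ω ^ 2 ∂P := mul_comm _ _

/-- If each coordinate of a random vector `g` in `ℝ^d` is nonzero with probability
at most `Δ`, then `‖E g‖² ≤ Δ · E ‖g‖²`. -/
theorem norm_sq_integral_le_of_sparse
    {Ω : Type*} [MeasurableSpace Ω] (P : Measure Ω) [IsProbabilityMeasure P]
    {d : ℕ} (g : Ω → EuclideanSpace ℝ (Fin d))
    (hg : Integrable g P) (hg2 : Integrable (fun ω => ‖g ω‖ ^ 2) P)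
    (Δ : ℝ) (hΔ : ∀ v : Fin d, P {ω | g ω v ≠ 0} ≤ ENNReal.ofReal Δ) :
    ‖∫ ω, g ω ∂P‖ ^ 2 ≤ Δ * ∫ ω, ‖g ω‖ ^ 2 ∂P := by
  -- handle Δ < 0
  by_cases hΔ0 : 0 ≤ Δ
  swap
  · push_neg at hΔ0
    have hg0 : ∀ᵐ ω ∂P, g ω = 0 := by
      have : ∀ v : Fin d, ∀ᵐ ω ∂P, g ω v = 0 := by
        intro v
        have := hΔ v
        rw [ENNReal.ofReal_eq_zero.mpr hΔ0.le, le_zero_iff] at this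
        exact (ae_iff (p := fun ω => g ω v = 0)).mpr (by simpa using this)
      filter_upwards [ae_all_iff.mpr this] with ω hω
      ext v; exact hω v
    have h1 : ∫ ω, g ω ∂P = 0 := by
      rw [integral_congr_ae (g := fun _ => (0 : EuclideanSpace ℝ (Fin d))) hg0]
      simp
    have h2 : ∫ ω, ‖g ω‖ ^ 2 ∂P = 0 := by
      rw [integral_congr_ae (g := fun _ => (0:ℝ)) (by filter_upwards [hg0] with ω hω; simp [hω])]
      simp
    simp [h1, h2]
  -- coordinates
  have hcoord : ∀ v : Fin d, Integrable (fun ω => g ω v) P := fun v =>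
    (EuclideanSpace.proj v : EuclideanSpace ℝ (Fin d) →L[ℝ] ℝ).integrable_comp hg
  have hcoord2 : ∀ v : Fin d, Integrable (fun ω => g ω v ^ 2) P := by
    intro v
    refine hg2.mono ((hcoord v).aestronglyMeasurable.pow 2) ?_
    filter_upwards with ω
    rw [Real.norm_eq_abs, Real.norm_eq_abs, abs_pow, sq_abs, abs_pow, sq_abs]
    rw [EuclideanSpace.norm_eq]
    rw [Real.sq_sqrt (Finset.sum_nonneg fun w _ => sq_nonneg _)]
    calc g ω v ^ 2 ≤ ∑ w, g ω w ^ 2 :=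
          Finset.single_le_sum (f := fun w => g ω w ^ 2) (fun w _ => sq_nonneg _) (Finset.mem_univ v)
      _ = ∑ w, ‖g ω w‖ ^ 2 := by simp [Real.norm_eq_abs, sq_abs]
  have hint_apply : ∀ v : Fin d, (∫ ω, g ω ∂P) v = ∫ ω, g ω v ∂P := fun v =>
    ((EuclideanSpace.proj v : EuclideanSpace ℝ (Fin d) →L[ℝ] ℝ).integral_comp_comm hg).symm
  have hnorm_int : ‖∫ ω, g ω ∂P‖ ^ 2 = ∑ v, (∫ ω, g ω v ∂P) ^ 2 := by
    rw [EuclideanSpace.norm_eq, Real.sq_sqrt (Finset.sum_nonneg fun w _ => sq_nonneg _)]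
    simp_rw [Real.norm_eq_abs, sq_abs, hint_apply]
  have hint_norm : ∫ ω, ‖g ω‖ ^ 2 ∂P = ∑ v, ∫ ω, g ω v ^ 2 ∂P := by
    rw [← integral_finset_sum _ fun v _ => hcoord2 v]
    apply integral_congr_ae
    filter_upwards with ω
    rw [EuclideanSpace.norm_eq, Real.sq_sqrt (Finset.sum_nonneg fun w _ => sq_nonneg _)]
    simp [Real.norm_eq_abs, sq_abs]
  rw [hnorm_int, hint_norm, Finset.mul_sum]
  exact Finset.sum_le_sum fun v _ =>
    sq_integral_le_of_sparse_coord P (fun ω => g ω v) (hcoord v) (hcoord2 v) Δ hΔ0 (hΔ v)
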